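/- For compositions α ⊨ n and β ⊨ m, the ribbon Schur functions satisfy r_α · r_β = r_{α·β} + r_{α⊙β}, where α·β is the concatenation and α⊙β is the near concatenation of α and β. -/

import Mathlib

open scoped Classical

noncomputable section

/-- The monomial `x_{κ(1)} ⋯ x_{κ(n)}` recording the colors of vertices `1, …, n`,
as an exponent vector. -/
def colMono (n : ℕ) (κ : ℕ → ℕ) : ℕ →₀ ℕ :=
  ∑ v ∈ Finset.Icc 1 n, Finsupp.single (κ v) 1

/-- A coloring `κ : [n] → ℕ`, normalized to be `0` outside of `[n] = {1, …, n}`. -/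
def Supported (n : ℕ) (κ : ℕ → ℕ) : Prop :=
  ∀ v, v < 1 ∨ n < v → κ v = 0

/-- The number of ascents of a coloring `κ`: edges `(i,j) ∈ E` with `i < j` and `κ i < κ j`. -/
def asc (E : Finset (ℕ × ℕ)) (κ : ℕ → ℕ) : ℕ :=
  (E.filter fun e => e.1 < e.2 ∧ κ e.1 < κ e.2).card

/-- The unicellular LLT polynomial of a graph with vertex set `[n]` and edge set `E`:
`LLT = Σ_κ q^{asc κ} x_{κ(1)} ⋯ x_{κ(n)}`, a power series in `x_0, x_1, x_2, …` with
coefficients in `ℤ[q]` (where `q = Polynomial.X`). -/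
def LLT (n : ℕ) (E : Finset (ℕ × ℕ)) : MvPowerSeries ℕ (Polynomial ℤ) :=
  fun d => ∑ᶠ κ : ℕ → ℕ,
    if Supported n κ ∧ colMono n κ = d then (Polynomial.X : Polynomial ℤ) ^ asc E κ else 0

/-- `set(α) = {α₁, α₁+α₂, …, α₁+⋯+α_{ℓ-1}} ⊆ [n-1]` for a composition `α ⊨ n`. -/
def compSet {n : ℕ} (c : Composition n) : Finset ℕ :=
  (Finset.Ico 1 c.length).image c.sizeUpTo

/-- The condition on a coloring `κ : [n] → ℕ` in the definition of the ribbon Schur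
function `r_α`: `κ(i) < κ(i+1)` if `i ∈ set(α)` and `κ(i) ≥ κ(i+1)` otherwise. -/
def RibbonCond (n : ℕ) {N : ℕ} (c : Composition N) (κ : ℕ → ℕ) : Prop :=
  ∀ i, 1 ≤ i → i ≤ n - 1 →
    (i ∈ compSet c → κ i < κ (i + 1)) ∧ (i ∉ compSet c → κ (i + 1) ≤ κ i)

/-- The ribbon Schur function `r_α` of a composition `α ⊨ n`, as a power series in
`x_0, x_1, x_2, …` with coefficients in `ℤ[q]`. -/
def ribbon {n : ℕ} (c : Composition n) : MvPowerSeries ℕ (Polynomial ℤ) :=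
  fun d => ∑ᶠ κ : ℕ → ℕ,
    if Supported n κ ∧ colMono n κ = d ∧ RibbonCond n c κ then 1 else 0

/-- `v(S) = Σ_{s ∈ S} v_s`. -/
def wt (v : ℕ → ℕ) (S : Finset ℕ) : ℕ := ∑ s ∈ S, v s

/-- `Σ_{α ⊨ n} q^{v(set(α))} r_α`. -/
def qRibbonSum (n : ℕ) (v : ℕ → ℕ) : MvPowerSeries ℕ (Polynomial ℤ) :=
  ∑ α : Composition n, (Polynomial.X : Polynomial ℤ) ^ wt v (compSet α) • ribbon α

/-- Edge set of the path `P_n`: edges `(i, i+1)` for `1 ≤ i ≤ n-1`. -/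
def pathEdges (n : ℕ) : Finset (ℕ × ℕ) :=
  (Finset.Icc 1 (n - 1)).image fun i => (i, i + 1)

/-- Edge set of the complete graph `K_m`: edges `(i, j)` for `1 ≤ i < j ≤ m`. -/
def completeEdges (m : ℕ) : Finset (ℕ × ℕ) :=
  ((Finset.Icc 1 m) ×ˢ (Finset.Icc 1 m)).filter fun e => e.1 < e.2

/-- Edge set of the melting complete graph `K_m^{(k)}`: `K_m` with the `k` edges
`(1,m), (1,m-1), …, (1,m-k+1)` removed. -/
def meltingCompleteEdges (m k : ℕ) : Finset (ℕ × ℕ) :=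
  completeEdges m \ ((Finset.Icc (m - k + 1) m).image fun j => (1, j))

/-- Edge set of the concatenation `G + H`, where `G` has `n` vertices:
`E(G) ∪ {(i+n-1, j+n-1) : (i,j) ∈ E(H)}`. -/
def concatEdges (n : ℕ) (EG EH : Finset (ℕ × ℕ)) : Finset (ℕ × ℕ) :=
  EG ∪ EH.image fun e => (e.1 + n - 1, e.2 + n - 1)

/-- Edge set of the melting lollipop graph `L_{m,n}^{(k)} = P_{n+1} + K_m^{(k)}`
on `n + m` vertices. -/
def lollipopEdges (m n k : ℕ) : Finset (ℕ × ℕ) :=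
  concatEdges (n + 1) (pathEdges (n + 1)) (meltingCompleteEdges m k)

/-- The area sequence of the graph with edge set `E`:
`a_i = max({0} ∪ {j - i : (i,j) ∈ E})`. -/
def areaSeq (E : Finset (ℕ × ℕ)) (i : ℕ) : ℕ :=
  (E.filter fun e => e.1 = i).sup fun e => e.2 - e.1

/-- Edge set of the reverse `Gʳ` of a graph `G` on `n` vertices:
`{(n+1-j, n+1-i) : (i,j) ∈ E(G)}`. -/
def reverseEdges (n : ℕ) (E : Finset (ℕ × ℕ)) : Finset (ℕ × ℕ) :=
  E.image fun e => (n + 1 - e.2, n + 1 - e.1)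

/-- Edge set of the two-headed melting lollipop graph
`⁽ᵏ¹⁾ₘ₁L_{m₂,n}^{(k₂)} = (K_{m₁}^{(k₁)})ʳ + P_{n+2} + K_{m₂}^{(k₂)}`,
where `np1 = n + 1` (so that `n ≥ -1` is allowed). It has `m₁ + n + m₂` vertices. -/
def twoHeadedEdges (m1 k1 np1 m2 k2 : ℕ) : Finset (ℕ × ℕ) :=
  concatEdges (m1 + np1)
    (concatEdges m1 (reverseEdges m1 (meltingCompleteEdges m1 k1)) (pathEdges (np1 + 1)))
    (meltingCompleteEdges m2 k2)

/-- `E` is the edge set of a unit interval graph on vertex set `[N] = {1, …, N}`: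
edges `(i,j)` satisfy `1 ≤ i < j ≤ N`, and if `(i,j) ∈ E` and `i ≤ k < l ≤ j`
then `(k,l) ∈ E`. -/
def IsUnitInterval (N : ℕ) (E : Finset (ℕ × ℕ)) : Prop :=
  (∀ e ∈ E, 1 ≤ e.1 ∧ e.1 < e.2 ∧ e.2 ≤ N) ∧
  ∀ i j k l : ℕ, (i, j) ∈ E → i ≤ k → k < l → l ≤ j → (k, l) ∈ E

/-- `a` is the area sequence of some unit interval graph on `N` vertices. -/
def IsAreaSeq (N : ℕ) (a : ℕ → ℕ) : Prop :=
  ∃ E : Finset (ℕ × ℕ), IsUnitInterval N E ∧ ∀ i, a i = areaSeq E i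

/-- The unit interval graph determined by an area sequence `a` on `N` vertices:
edges `(i, j)` with `i < j ≤ i + a_i`. -/
def graphOfArea (N : ℕ) (a : ℕ → ℕ) : Finset (ℕ × ℕ) :=
  ((Finset.Icc 1 N) ×ˢ (Finset.Icc 1 N)).filter fun e => e.1 < e.2 ∧ e.2 ≤ e.1 + a e.1

/-- The unicellular LLT polynomial of an area sequence `a` on `N` vertices. -/
def LLTarea (N : ℕ) (a : ℕ → ℕ) : MvPowerSeries ℕ (Polynomial ℤ) :=
  LLT N (graphOfArea N a)

/-- A standard Young tableau of shape `μ`: a filling of the cells of `μ` with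
`1, …, |μ|` each occurring exactly once, strictly increasing along rows and columns
(and `0` outside `μ`). -/
structure StandardYT (μ : YoungDiagram) where
  entry : ℕ × ℕ → ℕ
  bijOn : Set.BijOn entry ↑μ.cells (Set.Icc 1 μ.card)
  zeros : ∀ c ∉ μ.cells, entry c = 0
  row_lt : ∀ i j1 j2 : ℕ, j1 < j2 → (i, j2) ∈ μ → entry (i, j1) < entry (i, j2)
  col_lt : ∀ i1 i2 j : ℕ, i1 < i2 → (i2, j) ∈ μ → entry (i1, j) < entry (i2, j)

/-- The descent set `D(T) ⊆ [N-1]` of a standard Young tableau `T`: those `k` such that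
`k + 1` lies in a strictly later row than `k`. -/
def descents {μ : YoungDiagram} (T : StandardYT μ) : Finset ℕ :=
  (Finset.Icc 1 (μ.card - 1)).filter fun k =>
    ∃ c1 ∈ μ.cells, ∃ c2 ∈ μ.cells,
      T.entry c1 = k ∧ T.entry c2 = k + 1 ∧ c1.1 < c2.1

/-- The weight (exponent vector) `x^T` of a semistandard Young tableau. -/
def ssytWeight {μ : YoungDiagram} (T : SemistandardYoungTableau μ) : ℕ →₀ ℕ :=
  ∑ c ∈ μ.cells, Finsupp.single (T c.1 c.2) 1

/-- The Schur function `s_μ = Σ_T x^T`, the sum over all semistandard Young tableaux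
of shape `μ`, as a power series in `x_0, x_1, x_2, …` with coefficients in `ℤ[q]`. -/
def schur (μ : YoungDiagram) : MvPowerSeries ℕ (Polynomial ℤ) :=
  fun d => ∑ᶠ T : SemistandardYoungTableau μ, if ssytWeight T = d then 1 else 0

/-- `Σ_{λ ⊢ N} Σ_{T ∈ SYT(λ)} q^{b(D(T))} s_λ`, where partitions `λ ⊢ N` are identified
with Young diagrams with `N` cells. -/
def descentSchurSum (N : ℕ) (b : ℕ → ℕ) : MvPowerSeries ℕ (Polynomial ℤ) :=
  ∑ᶠ (μ : YoungDiagram) (_ : μ.card = N) (T : StandardYT μ),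
    (Polynomial.X : Polynomial ℤ) ^ wt b (descents T) • schur μ

/-! ### Auxiliary lemmas for `ribbon_mul` -/

section RibbonMulAux

open Finset

lemma sizeUpTo_monotone {N : ℕ} (c : Composition N) : Monotone c.sizeUpTo :=
  monotone_nat_of_le_succ fun i => by
    rcases lt_or_ge i c.length with h | h
    · exact (c.sizeUpTo_strict_mono h).le
    · rw [c.sizeUpTo_ofLength_le i h, c.sizeUpTo_ofLength_le (i + 1) (h.trans (Nat.le_succ i))]

lemma compSet_bounds {N : ℕ} (c : Composition N) {s : ℕ} (hs : s ∈ compSet c) :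
    1 ≤ s ∧ s < N := by
  obtain ⟨j, hj, rfl⟩ := Finset.mem_image.mp hs
  rw [Finset.mem_Ico] at hj
  have hlen : 0 < c.length := lt_of_le_of_lt (Nat.zero_le _) hj.2
  constructor
  · have h1 : 1 ≤ c.sizeUpTo 1 := by
      rw [c.sizeUpTo_succ hlen, c.sizeUpTo_zero]
      have := c.one_le_blocks' hlen
      omega
    exact h1.trans (sizeUpTo_monotone c hj.1)
  · have h2 : c.sizeUpTo j < c.sizeUpTo c.length :=
      lt_of_lt_of_le (c.sizeUpTo_strict_mono hj.2) (sizeUpTo_monotone c hj.2)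
    rwa [c.sizeUpTo_length] at h2

lemma colMono_apply (N : ℕ) (κ : ℕ → ℕ) (a : ℕ) :
    colMono N κ a = ∑ v ∈ Finset.Icc 1 N, if κ v = a then 1 else 0 := by
  rw [colMono, Finset.sum_apply']
  refine Finset.sum_congr rfl fun v _ => ?_
  rw [Finsupp.single_apply]

lemma colMono_mem_support {N : ℕ} {κ : ℕ → ℕ} {d : ℕ →₀ ℕ} (h : colMono N κ = d)
    {v : ℕ} (hv : v ∈ Finset.Icc 1 N) : κ v ∈ d.support := by
  rw [Finsupp.mem_support_iff, ← h, colMono_apply]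
  have h1 : (if κ v = κ v then 1 else 0) ≤
      ∑ w ∈ Finset.Icc 1 N, if κ w = κ v then 1 else 0 :=
    Finset.single_le_sum (f := fun w => if κ w = κ v then 1 else 0) (fun w _ => Nat.zero_le _) hv
  rw [if_pos rfl] at h1
  omega

/-- The finite set of candidate colorings: functions vanishing outside `[1, N]` with
values in `{0} ∪ supp d` on `[1, N]`. -/
def bigF (N : ℕ) (d : ℕ →₀ ℕ) : Finset (ℕ → ℕ) :=
  ((Finset.Icc 1 N).pi fun _ => insert 0 d.support).image
    fun g v => if h : v ∈ Finset.Icc 1 N then g v h else 0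

lemma mem_bigF {N : ℕ} {d : ℕ →₀ ℕ} {κ : ℕ → ℕ} :
    κ ∈ bigF N d ↔ Supported N κ ∧ ∀ v ∈ Finset.Icc 1 N, κ v ∈ insert 0 d.support := by
  constructor
  · rintro hκ
    obtain ⟨g, hg, rfl⟩ := Finset.mem_image.mp hκ
    rw [Finset.mem_pi] at hg
    constructor
    · intro v hv
      have : v ∉ Finset.Icc 1 N := by rw [Finset.mem_Icc]; omega
      simp [this]
    · intro v hv
      simpa [hv] using hg v hv
  · rintro ⟨h1, h2⟩
    refine Finset.mem_image.mpr ⟨fun v _ => κ v, ?_, ?_⟩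
    · rw [Finset.mem_pi]; exact fun v hv => h2 v hv
    · funext v
      by_cases hv : v ∈ Finset.Icc 1 N
      · simp [hv]
      · rw [dif_neg hv]
        rw [Finset.mem_Icc] at hv
        exact (h1 v (by omega)).symm

lemma ribbon_coeff {N : ℕ} (c : Composition N) (d e : ℕ →₀ ℕ)
    (hsub : e.support ⊆ d.support) :
    ribbon c e = ∑ κ ∈ bigF N d,
      if Supported N κ ∧ colMono N κ = e ∧ RibbonCond N c κ then 1 else 0 := by
  rw [ribbon]
  apply finsum_eq_sum_of_support_subset
  intro κ hκ
  rw [Function.mem_support] at hκ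
  have hc : Supported N κ ∧ colMono N κ = e ∧ RibbonCond N c κ := by
    by_contra h; rw [if_neg h] at hκ; exact hκ rfl
  rw [Finset.mem_coe, mem_bigF]
  exact ⟨hc.1, fun v hv => Finset.mem_insert_of_mem (hsub (colMono_mem_support hc.2.1 hv))⟩

/-- Glue a coloring of `[n]` and a coloring of `[m]` (shifted by `n`). -/
def glue (n : ℕ) (κ1 κ2 : ℕ → ℕ) : ℕ → ℕ := fun v => if v ≤ n then κ1 v else κ2 (v - n)

/-- Restriction of a coloring to `[1, n]`. -/
def res1 (n : ℕ) (κ : ℕ → ℕ) : ℕ → ℕ := fun v => if 1 ≤ v ∧ v ≤ n then κ v else 0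

/-- Shifted restriction of a coloring to `[n+1, n+m]`. -/
def res2 (n m : ℕ) (κ : ℕ → ℕ) : ℕ → ℕ := fun v => if 1 ≤ v ∧ v ≤ m then κ (v + n) else 0

lemma colMono_glue (n m : ℕ) (κ1 κ2 : ℕ → ℕ) :
    colMono (n + m) (glue n κ1 κ2) = colMono n κ1 + colMono m κ2 := by
  have hIcc : ∀ N : ℕ, Finset.Icc 1 N = Finset.Ioc 0 N := fun N => Finset.Icc_add_one_left_eq_Ioc (a := 0) (b := N)
  rw [colMono, colMono, colMono, hIcc, hIcc, hIcc,
    ← Finset.sum_Ioc_consecutive _ (Nat.zero_le n) (Nat.le_add_right n m)]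
  congr 1
  · refine Finset.sum_congr rfl fun v hv => ?_
    rw [Finset.mem_Ioc] at hv
    rw [glue, if_pos hv.2]
  · refine Finset.sum_nbij' (fun v => v - n) (fun w => w + n) ?_ ?_ ?_ ?_ ?_
    · intro v hv; simp only [Finset.mem_Ioc] at hv ⊢; omega
    · intro w hw; simp only [Finset.mem_Ioc] at hw ⊢; omega
    · intro v hv; simp only [Finset.mem_Ioc] at hv; omega
    · intro w hw; simp only [Finset.mem_Ioc] at hw; omega
    · intro v hv
      rw [Finset.mem_Ioc] at hv
      rw [glue, if_neg (by omega)]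

lemma supported_glue {n m : ℕ} (hn : 1 ≤ n) {κ1 κ2 : ℕ → ℕ}
    (h1 : Supported n κ1) (h2 : Supported m κ2) : Supported (n + m) (glue n κ1 κ2) := by
  intro v hv
  rw [glue]
  rcases hv with hv | hv
  · rw [if_pos (by omega)]; exact h1 v (Or.inl hv)
  · rw [if_neg (by omega)]; exact h2 (v - n) (Or.inr (by omega))

lemma mem_image_addn_iff {m n i : ℕ} (β : Composition m) :
    i ∈ (compSet β).image (· + n) ↔ n < i ∧ i - n ∈ compSet β := by
  rw [Finset.mem_image]
  constructor
  · rintro ⟨s, hs, rfl⟩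
    have hb := compSet_bounds β hs
    refine ⟨by omega, ?_⟩
    simpa using hs
  · rintro ⟨h1, h2⟩
    exact ⟨i - n, h2, by omega⟩

lemma ribbonCond_glue_iff {n m : ℕ} (hn : 1 ≤ n) (hm : 1 ≤ m)
    {α : Composition n} {β : Composition m} {c : Composition (n + m)} (mid : Prop)
    (hmem : ∀ i, i ∈ compSet c ↔
      i ∈ compSet α ∨ (i = n ∧ mid) ∨ (n < i ∧ i - n ∈ compSet β))
    (κ1 κ2 : ℕ → ℕ) :
    RibbonCond (n + m) c (glue n κ1 κ2) ↔
      RibbonCond n α κ1 ∧ RibbonCond m β κ2 ∧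
        (mid → κ1 n < κ2 1) ∧ (¬mid → κ2 1 ≤ κ1 n) := by
  have gl : ∀ v, v ≤ n → glue n κ1 κ2 v = κ1 v := fun v hv => if_pos hv
  have gr : ∀ v, n < v → glue n κ1 κ2 v = κ2 (v - n) := fun v hv => if_neg (by omega)
  have memlt : ∀ i, i < n → (i ∈ compSet c ↔ i ∈ compSet α) := by
    intro i hi
    rw [hmem]
    constructor
    · rintro (h | ⟨h, -⟩ | ⟨h, -⟩) <;> first | exact h | omega
    · exact fun h => Or.inl h
  have memgt : ∀ i, n < i → (i ∈ compSet c ↔ i - n ∈ compSet β) := by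
    intro i hi
    rw [hmem]
    constructor
    · rintro (h | ⟨h, -⟩ | ⟨-, h⟩)
      · exact absurd (compSet_bounds α h).2 (by omega)
      · omega
      · exact h
    · exact fun h => Or.inr (Or.inr ⟨hi, h⟩)
  constructor
  · intro H
    refine ⟨?_, ?_, ?_, ?_⟩
    · intro i h1 h2
      have Hi := H i h1 (by omega)
      rw [gl i (by omega), gl (i + 1) (by omega), memlt i (by omega)] at Hi
      exact Hi
    · intro j h1 h2
      have Hi := H (j + n) (by omega) (by omega)
      rw [gr (j + n) (by omega), gr (j + n + 1) (by omega), memgt (j + n) (by omega)] at Hi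
      have e1 : j + n - n = j := by omega
      have e2 : j + n + 1 - n = j + 1 := by omega
      rw [e1, e2] at Hi
      exact Hi
    · intro hmid
      have Hn := H n hn (by omega)
      have hnc : n ∈ compSet c := (hmem n).mpr (Or.inr (Or.inl ⟨rfl, hmid⟩))
      have := Hn.1 hnc
      rwa [gl n le_rfl, gr (n + 1) (by omega), Nat.add_sub_cancel_left] at this
    · intro hmid
      have Hn := H n hn (by omega)
      have hnc : n ∉ compSet c := by
        rw [hmem]
        rintro (h | ⟨-, h⟩ | ⟨h, -⟩)
        · exact absurd (compSet_bounds α h).2 (by omega)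
        · exact hmid h
        · omega
      have := Hn.2 hnc
      rwa [gl n le_rfl, gr (n + 1) (by omega), Nat.add_sub_cancel_left] at this
  · rintro ⟨R1, R2, Hlt, Hle⟩ i h1 h2
    rcases lt_trichotomy i n with hi | hi | hi
    · rw [gl i (by omega), gl (i + 1) (by omega), memlt i hi]
      exact R1 i h1 (by omega)
    · subst hi
      rw [gl i le_rfl, gr (i + 1) (by omega), Nat.add_sub_cancel_left]
      by_cases hmid : mid
      · have hic : i ∈ compSet c := (hmem i).mpr (Or.inr (Or.inl ⟨rfl, hmid⟩))
        exact ⟨fun _ => Hlt hmid, fun h => absurd hic h⟩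
      · have hic : i ∉ compSet c := by
          rw [hmem]
          rintro (h | ⟨-, h⟩ | ⟨h, -⟩)
          · exact absurd (compSet_bounds α h).2 (by omega)
          · exact hmid h
          · omega
        exact ⟨fun h => absurd h hic, fun _ => Hle hmid⟩
    · rw [gr i hi, gr (i + 1) (by omega), memgt i hi]
      have e2 : i + 1 - n = i - n + 1 := by omega
      rw [e2]
      exact R2 (i - n) (by omega) (by omega)

lemma ite_one_zero_mul {R : Type*} [MulZeroOneClass R] (a b : Prop) [Decidable a] [Decidable b] :
    (if a then (1 : R) else 0) * (if b then 1 else 0) = if a ∧ b then 1 else 0 := by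
  by_cases ha : a <;> by_cases hb : b <;> simp [ha, hb]

end RibbonMulAux

/-- For compositions `α ⊨ n` and `β ⊨ m`,
`r_α ⬝ r_β = r_{α·β} + r_{α⊙β}`, where the concatenation `α·β ⊨ n+m` satisfies
`set(α·β) = set(α) ∪ {n} ∪ {n+s : s ∈ set(β)}` and the near concatenation `α⊙β ⊨ n+m`
satisfies `set(α⊙β) = set(α·β) \ {n}`. -/
theorem ribbon_mul (n m : ℕ) (hn : 1 ≤ n) (hm : 1 ≤ m)
    (α : Composition n) (β : Composition m) (γ δ : Composition (n + m))
    (hγ : compSet γ = compSet α ∪ {n} ∪ (compSet β).image (· + n))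
    (hδ : compSet δ = (compSet α ∪ {n} ∪ (compSet β).image (· + n)) \ {n}) :
    ribbon α * ribbon β = ribbon γ + ribbon δ := by
  funext d
  -- LHS as a sum over pairs of colorings
  have hL : (ribbon α * ribbon β) d =
      ∑ z ∈ bigF n d ×ˢ bigF m d,
        if (Supported n z.1 ∧ RibbonCond n α z.1) ∧ (Supported m z.2 ∧ RibbonCond m β z.2) ∧
            colMono n z.1 + colMono m z.2 = d then (1 : Polynomial ℤ) else 0 := by
    have h0 : (ribbon α * ribbon β) d =
        ∑ p ∈ Finset.HasAntidiagonal.antidiagonal d, ribbon α p.1 * ribbon β p.2 := by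
      rw [← MvPowerSeries.coeff_apply (ribbon α * ribbon β) d, MvPowerSeries.coeff_mul]
      simp only [MvPowerSeries.coeff_apply]
    have step1 : ∀ p ∈ Finset.HasAntidiagonal.antidiagonal d,
        ribbon α p.1 * ribbon β p.2 =
          ∑ κ1 ∈ bigF n d, ∑ κ2 ∈ bigF m d,
            (if Supported n κ1 ∧ colMono n κ1 = p.1 ∧ RibbonCond n α κ1 then (1 : Polynomial ℤ)
              else 0) *
            (if Supported m κ2 ∧ colMono m κ2 = p.2 ∧ RibbonCond m β κ2 then 1 else 0) := by
      intro p hp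
      rw [Finset.HasAntidiagonal.mem_antidiagonal] at hp
      have hs1 : p.1.support ⊆ d.support := by
        intro a ha
        rw [Finsupp.mem_support_iff] at ha ⊢
        rw [← hp]
        simp only [Finsupp.add_apply]
        omega
      have hs2 : p.2.support ⊆ d.support := by
        intro a ha
        rw [Finsupp.mem_support_iff] at ha ⊢
        rw [← hp]
        simp only [Finsupp.add_apply]
        omega
      rw [ribbon_coeff α d p.1 hs1, ribbon_coeff β d p.2 hs2, Finset.sum_mul_sum]
    rw [h0, Finset.sum_congr rfl step1, Finset.sum_comm]
    rw [Finset.sum_congr rfl fun (κ1 : ℕ → ℕ) (_ : κ1 ∈ bigF n d) =>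
      (Finset.sum_comm (s := Finset.HasAntidiagonal.antidiagonal d) (t := bigF m d))]
    rw [← Finset.sum_product']
    refine Finset.sum_congr rfl fun z _ => ?_
    have hterm : ∀ p ∈ Finset.HasAntidiagonal.antidiagonal d,
        (if Supported n z.1 ∧ colMono n z.1 = p.1 ∧ RibbonCond n α z.1 then (1 : Polynomial ℤ)
          else 0) *
        (if Supported m z.2 ∧ colMono m z.2 = p.2 ∧ RibbonCond m β z.2 then 1 else 0) =
        if p = (colMono n z.1, colMono m z.2) then
          (if (Supported n z.1 ∧ RibbonCond n α z.1) ∧ (Supported m z.2 ∧ RibbonCond m β z.2)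
            then (1 : Polynomial ℤ) else 0) else 0 := by
      intro p _
      rw [ite_one_zero_mul]
      by_cases hp : p = (colMono n z.1, colMono m z.2)
      · subst hp
        rw [if_pos rfl]
        refine if_congr ?_ rfl rfl
        constructor
        · rintro ⟨⟨a, -, c⟩, e, -, g⟩
          exact ⟨⟨a, c⟩, e, g⟩
        · rintro ⟨⟨a, c⟩, e, g⟩
          exact ⟨⟨a, rfl, c⟩, e, rfl, g⟩
      · rw [if_neg hp, if_neg]
        rintro ⟨⟨-, h1, -⟩, -, h2, -⟩
        exact hp (Prod.ext h1.symm h2.symm)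
    rw [Finset.sum_congr rfl hterm, Finset.sum_ite_eq' (Finset.HasAntidiagonal.antidiagonal d)]
    by_cases h1 : Supported n z.1 ∧ RibbonCond n α z.1 <;>
      by_cases h2 : Supported m z.2 ∧ RibbonCond m β z.2 <;>
      by_cases hd : colMono n z.1 + colMono m z.2 = d <;>
      simp [h1, h2, hd, Finset.HasAntidiagonal.mem_antidiagonal]
  -- RHS as a sum over colorings of [n + m]
  have hγn : n ∈ compSet γ := by
    rw [hγ]
    simp
  have hδn : n ∉ compSet δ := by
    rw [hδ]
    simp
  have hexcl : ∀ κ : ℕ → ℕ, ¬(RibbonCond (n + m) γ κ ∧ RibbonCond (n + m) δ κ) := by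
    rintro κ ⟨h1, h2⟩
    have a1 := (h1 n hn (by omega)).1 hγn
    have a2 := (h2 n hn (by omega)).2 hδn
    omega
  have hR : (ribbon γ + ribbon δ) d =
      ∑ κ ∈ bigF (n + m) d,
        if Supported (n + m) κ ∧ colMono (n + m) κ = d ∧
            (RibbonCond (n + m) γ κ ∨ RibbonCond (n + m) δ κ) then (1 : Polynomial ℤ) else 0 := by
    have h0 : (ribbon γ + ribbon δ) d = ribbon γ d + ribbon δ d := rfl
    rw [h0, ribbon_coeff γ d d subset_rfl, ribbon_coeff δ d d subset_rfl,
      ← Finset.sum_add_distrib]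
    refine Finset.sum_congr rfl fun κ _ => ?_
    by_cases r1 : RibbonCond (n + m) γ κ <;> by_cases r2 : RibbonCond (n + m) δ κ
    · exact absurd ⟨r1, r2⟩ (hexcl κ)
    all_goals by_cases hs : Supported (n + m) κ <;>
      by_cases hc : colMono (n + m) κ = d <;> simp [r1, r2, hs, hc]
  rw [hL, hR]
  -- membership characterizations
  have hmemγ : ∀ i, i ∈ compSet γ ↔
      i ∈ compSet α ∨ (i = n ∧ True) ∨ (n < i ∧ i - n ∈ compSet β) := by
    intro i
    rw [hγ, Finset.mem_union, Finset.mem_union, Finset.mem_singleton, mem_image_addn_iff β]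
    tauto
  have hmemδ : ∀ i, i ∈ compSet δ ↔
      i ∈ compSet α ∨ (i = n ∧ False) ∨ (n < i ∧ i - n ∈ compSet β) := by
    intro i
    rw [hδ, Finset.mem_sdiff, Finset.mem_union, Finset.mem_union, Finset.mem_singleton,
      mem_image_addn_iff β]
    constructor
    · rintro ⟨(h | h) | h, hne⟩
      · exact Or.inl h
      · exact absurd h hne
      · exact Or.inr (Or.inr h)
    · rintro (h | ⟨-, h⟩ | h)
      · exact ⟨Or.inl (Or.inl h), by have := (compSet_bounds α h).2; omega⟩
      · exact h.elim
      · exact ⟨Or.inr h, by have := h.1; omega⟩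
  -- the bijection between pairs and glued colorings
  refine Finset.sum_nbij' (fun z => glue n z.1 z.2) (fun κ => (res1 n κ, res2 n m κ))
    ?_ ?_ ?_ ?_ ?_
  · intro z hz
    rw [Finset.mem_product] at hz
    obtain ⟨hz1s, hz1v⟩ := mem_bigF.mp hz.1
    obtain ⟨hz2s, hz2v⟩ := mem_bigF.mp hz.2
    rw [mem_bigF]
    refine ⟨supported_glue hn hz1s hz2s, fun v hv => ?_⟩
    rw [Finset.mem_Icc] at hv
    simp only [glue]
    by_cases hvn : v ≤ n
    · rw [if_pos hvn]
      exact hz1v v (Finset.mem_Icc.mpr ⟨hv.1, hvn⟩)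
    · rw [if_neg hvn]
      exact hz2v (v - n) (Finset.mem_Icc.mpr ⟨by omega, by omega⟩)
  · intro κ hκ
    obtain ⟨hs, hvv⟩ := mem_bigF.mp hκ
    rw [Finset.mem_product]
    constructor
    · rw [mem_bigF]
      constructor
      · intro v hv
        simp only [res1]
        rw [if_neg (by omega)]
      · intro v hv
        rw [Finset.mem_Icc] at hv
        simp only [res1]
        rw [if_pos hv]
        exact hvv v (Finset.mem_Icc.mpr ⟨hv.1, by omega⟩)
    · rw [mem_bigF]
      constructor
      · intro v hv
        simp only [res2]
        rw [if_neg (by omega)]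
      · intro v hv
        rw [Finset.mem_Icc] at hv
        simp only [res2]
        rw [if_pos hv]
        exact hvv (v + n) (Finset.mem_Icc.mpr ⟨by omega, by omega⟩)
  · intro z hz
    rw [Finset.mem_product] at hz
    have h1 := (mem_bigF.mp hz.1).1
    have h2 := (mem_bigF.mp hz.2).1
    have e1 : res1 n (glue n z.1 z.2) = z.1 := by
      funext v
      simp only [res1, glue]
      by_cases hv : 1 ≤ v ∧ v ≤ n
      · rw [if_pos hv, if_pos hv.2]
      · rw [if_neg hv]
        exact (h1 v (by omega)).symm
    have e2 : res2 n m (glue n z.1 z.2) = z.2 := by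
      funext v
      simp only [res2, glue]
      by_cases hv : 1 ≤ v ∧ v ≤ m
      · rw [if_pos hv, if_neg (show ¬ v + n ≤ n by omega), Nat.add_sub_cancel]
      · rw [if_neg hv]
        exact (h2 v (by omega)).symm
    exact Prod.ext e1 e2
  · intro κ hκ
    have hs := (mem_bigF.mp hκ).1
    funext v
    simp only [glue, res1, res2]
    by_cases hv : v ≤ n
    · rw [if_pos hv]
      by_cases h1 : 1 ≤ v
      · rw [if_pos ⟨h1, hv⟩]
      · rw [if_neg (show ¬ (1 ≤ v ∧ v ≤ n) by omega)]
        exact (hs v (by omega)).symm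
    · rw [if_neg hv]
      by_cases h2 : v - n ≤ m
      · rw [if_pos ⟨by omega, h2⟩, Nat.sub_add_cancel (show n ≤ v by omega)]
      · rw [if_neg (show ¬ (1 ≤ v - n ∧ v - n ≤ m) by omega)]
        exact (hs v (by omega)).symm
  · intro z hz
    rw [Finset.mem_product] at hz
    obtain ⟨hz1s, -⟩ := mem_bigF.mp hz.1
    obtain ⟨hz2s, -⟩ := mem_bigF.mp hz.2
    refine if_congr ?_ rfl rfl
    constructor
    · rintro ⟨⟨-, r1⟩, ⟨-, r2⟩, hcol⟩
      refine ⟨supported_glue hn hz1s hz2s, ?_, ?_⟩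
      · rw [colMono_glue]
        exact hcol
      · rcases lt_or_ge (z.1 n) (z.2 1) with h | h
        · exact Or.inl ((ribbonCond_glue_iff hn hm True hmemγ z.1 z.2).mpr
            ⟨r1, r2, fun _ => h, fun h' => absurd trivial h'⟩)
        · exact Or.inr ((ribbonCond_glue_iff hn hm False hmemδ z.1 z.2).mpr
            ⟨r1, r2, fun h' => h'.elim, fun _ => h⟩)
    · rintro ⟨-, hcol, hr⟩
      rw [colMono_glue] at hcol
      rcases hr with hr | hr
      · obtain ⟨r1, r2, -⟩ := (ribbonCond_glue_iff hn hm True hmemγ z.1 z.2).mp hr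
        exact ⟨⟨hz1s, r1⟩, ⟨hz2s, r2⟩, hcol⟩
      · obtain ⟨r1, r2, -⟩ := (ribbonCond_glue_iff hn hm False hmemδ z.1 z.2).mp hr
        exact ⟨⟨hz1s, r1⟩, ⟨hz2s, r2⟩, hcol⟩
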